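/- arXiv:1609.09364 — 2 statements merged into one kernel-verified Lean document; each statement's English description precedes it below -/
import Mathlib

section
/- The Baumslag–Solitar monoid BS⁺(3,2), i.e., the monoid presented by ⟨a, b | a b³ = b² a⟩, is residually finite: for any two distinct elements x, y there exist a finite monoid F and a monoid homomorphism f to F with f(x) ≠ f(y). -/
namespace Stmt18

/-- A monoid `M` is residually finite if distinct elements can be separated by a
homomorphism to a finite monoid. -/
def ResiduallyFinite (M : Type) [Monoid M] : Prop :=
  ∀ x y : M, x ≠ y →
    ∃ (F : Type) (mF : Monoid F)
      (f : @MonoidHom M F (@MulOneClass.toMulOne M Monoid.toMulOneClass)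
        (@MulOneClass.toMulOne F mF.toMulOneClass)),
      Finite F ∧ f x ≠ f y

/-- The generators of the Baumslag–Solitar monoid `BS⁺(3,2)`. -/
inductive X : Type
  | a : X
  | b : X
  deriving DecidableEq

instance instFintypeX : Fintype X :=
  ⟨{X.a, X.b}, fun x => by cases x <;> simp⟩

/-- The defining relation of `BS⁺(3,2)`: `a b³ = b² a`. -/
def bsRel : FreeMonoid X → FreeMonoid X → Prop :=
  fun u v =>
    u = FreeMonoid.ofList [X.a, X.b, X.b, X.b] ∧ v = FreeMonoid.ofList [X.b, X.b, X.a]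

/-- The Baumslag–Solitar monoid `BS⁺(3,2) = ⟨a, b | a b³ = b² a⟩`. -/
def BS32 : Type := (conGen bsRel).Quotient

instance : Monoid BS32 := by unfold BS32; infer_instance

/-! ## Matrix invariant -/

abbrev Mat := Matrix (Fin 2) (Fin 2) ℕ

def Mgen : X → Mat
  | X.a => !![2,0;0,3]
  | X.b => !![1,1;0,1]

def phiF : FreeMonoid X →* Mat := FreeMonoid.lift Mgen

/-! ## Normal forms -/

/-- the word `b^c0 · a b^{c_k} · ⋯ · a b^{c_1}` where `L = [c_1, …, c_k]`. -/
def wrd : ℕ → List (Fin 3) → List X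
  | c0, [] => List.replicate c0 X.b
  | c0, c :: L => wrd c0 L ++ X.a :: List.replicate (c : ℕ) X.b

def prep : X → ℕ × List (Fin 3) → ℕ × List (Fin 3)
  | X.b, (c0, L) => (c0 + 1, L)
  | X.a, (c0, L) => (2 * (c0 / 3), L ++ [⟨c0 % 3, Nat.mod_lt _ (by norm_num)⟩])

def nrm (w : List X) : ℕ × List (Fin 3) := w.foldr prep (0, [])

def mm : ℕ → List (Fin 3) → ℕ
  | c0, [] => c0
  | c0, c :: L => 3 * mm c0 L + (c : ℕ) * 2 ^ (L.length + 1)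

lemma wrd_succ (c0 : ℕ) (L : List (Fin 3)) : wrd (c0 + 1) L = X.b :: wrd c0 L := by
  induction L with
  | nil => simp [wrd, List.replicate_succ]
  | cons c L ih => simp [wrd, ih]

lemma wrd_split (c0 : ℕ) (L : List (Fin 3)) :
    wrd c0 L = List.replicate c0 X.b ++ wrd 0 L := by
  induction c0 with
  | zero => simp
  | succ n ih => rw [wrd_succ, ih, List.replicate_succ]; simp

lemma wrd_snoc (c0 : ℕ) (L : List (Fin 3)) (r : Fin 3) :
    wrd c0 (L ++ [r]) = List.replicate c0 X.b ++ X.a :: wrd (r : ℕ) L := by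
  induction L generalizing c0 with
  | nil => simp [wrd, wrd_split (r : ℕ) []]
  | cons c T ih =>
      show wrd c0 (T ++ [r]) ++ X.a :: List.replicate (c : ℕ) X.b = _
      rw [ih]
      simp [wrd]

/-! ## The congruence -/

def cgen : Con (FreeMonoid X) := conGen bsRel

def cl (u v : List X) : Prop := cgen (FreeMonoid.ofList u) (FreeMonoid.ofList v)

lemma cl_refl (u : List X) : cl u u := cgen.refl _

lemma cl_trans {u v w : List X} (h1 : cl u v) (h2 : cl v w) : cl u w := cgen.trans h1 h2

lemma cl_cons (x : X) {u v : List X} (h : cl u v) : cl (x :: u) (x :: v) := by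
  have : ∀ l : List X, FreeMonoid.ofList (x :: l) =
      FreeMonoid.ofList [x] * FreeMonoid.ofList l := fun l => rfl
  unfold cl
  rw [this u, this v]
  exact cgen.mul (cgen.refl _) h

lemma cl_append_left (p : List X) {u v : List X} (h : cl u v) : cl (p ++ u) (p ++ v) := by
  induction p with
  | nil => exact h
  | cons x t ih => exact cl_cons x ih

lemma cl_base (s : List X) : cl (X.a :: X.b :: X.b :: X.b :: s) (X.b :: X.b :: X.a :: s) := by
  have h0 : cgen (FreeMonoid.ofList [X.a, X.b, X.b, X.b]) (FreeMonoid.ofList [X.b, X.b, X.a]) :=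
    ConGen.Rel.of _ _ ⟨rfl, rfl⟩
  have h1 : cl ([X.a, X.b, X.b, X.b] ++ s) ([X.b, X.b, X.a] ++ s) :=
    cgen.mul h0 (cgen.refl (FreeMonoid.ofList s))
  simpa using h1

lemma cl_key (q r : ℕ) (s : List X) :
    cl (X.a :: (List.replicate (3 * q + r) X.b ++ s))
       (List.replicate (2 * q) X.b ++ X.a :: (List.replicate r X.b ++ s)) := by
  induction q generalizing s with
  | zero => simpa using cl_refl _
  | succ n ih =>
      have e : 3 * (n + 1) + r = 3 * n + r + 3 := by ring
      rw [e]
      have e2 : List.replicate (3 * n + r + 3) X.b =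
          X.b :: X.b :: X.b :: List.replicate (3 * n + r) X.b := by
        rw [show 3 * n + r + 3 = 3 + (3 * n + r) by ring, List.replicate_add]
        rfl
      rw [e2]
      have e3 : 2 * (n + 1) = 2 * n + 1 + 1 := by ring
      rw [e3, List.replicate_succ, List.replicate_succ]
      refine cl_trans ?_ (cl_cons _ (cl_cons _ (ih s)))
      show cl (X.a :: X.b :: X.b :: X.b :: (List.replicate (3 * n + r) X.b ++ s))
        (X.b :: X.b :: (X.a :: (List.replicate (3 * n + r) X.b ++ s)))
      exact cl_base _

lemma nrm_spec (l : List X) : cl l (wrd (nrm l).1 (nrm l).2) := by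
  induction l with
  | nil => exact cl_refl _
  | cons x t ih =>
      have h1 : cl (x :: t) (x :: wrd (nrm t).1 (nrm t).2) := cl_cons x ih
      refine cl_trans h1 ?_
      show cl (x :: wrd (nrm t).1 (nrm t).2) (wrd (prep x (nrm t)).1 (prep x (nrm t)).2)
      obtain ⟨c0, L⟩ := nrm t
      cases x with
      | b => rw [show prep X.b (c0, L) = (c0 + 1, L) from rfl, wrd_succ]; exact cl_refl _
      | a =>
          show cl (X.a :: wrd c0 L)
            (wrd (2 * (c0 / 3)) (L ++ [⟨c0 % 3, Nat.mod_lt _ (by norm_num)⟩]))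
          rw [wrd_snoc]
          have hr : ((⟨c0 % 3, Nat.mod_lt _ (by norm_num)⟩ : Fin 3) : ℕ) = c0 % 3 := rfl
          rw [hr, wrd_split c0 L, wrd_split (c0 % 3) L]
          nth_rewrite 1 [show c0 = 3 * (c0 / 3) + c0 % 3 from (Nat.div_add_mod c0 3).symm]
          exact cl_key (c0 / 3) (c0 % 3) (wrd 0 L)

/-! ## Matrix computations -/

lemma prod_replicate_b (n : ℕ) :
    ((List.replicate n X.b).map Mgen).prod = !![1, n; 0, 1] := by
  induction n with
  | zero => simp [Matrix.one_fin_two]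
  | succ n ih =>
      rw [List.replicate_succ]
      simp only [List.map_cons, List.prod_cons, ih]
      show Mgen X.b * _ = _
      rw [Mgen]
      ext i j
      fin_cases i <;> fin_cases j <;>
        simp [Matrix.mul_apply, Fin.sum_univ_two] <;> ring

lemma prod_wrd (c0 : ℕ) (L : List (Fin 3)) :
    ((wrd c0 L).map Mgen).prod = !![2 ^ L.length, mm c0 L; 0, 3 ^ L.length] := by
  induction L with
  | nil =>
      show ((List.replicate c0 X.b).map Mgen).prod = _
      rw [prod_replicate_b]
      simp [mm]
  | cons c T ih =>
      show ((wrd c0 T ++ X.a :: List.replicate (c : ℕ) X.b).map Mgen).prod = _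
      rw [List.map_append, List.prod_append, ih]
      simp only [List.map_cons, List.prod_cons, prod_replicate_b]
      show _ * (Mgen X.a * _) = _
      rw [Mgen, mm]
      ext i j
      fin_cases i <;> fin_cases j <;>
        simp [Matrix.mul_apply, Fin.sum_univ_two, List.length_cons, pow_succ] <;> ring

lemma two_pow_mod3 (k : ℕ) : 2 ^ k % 3 = 1 ∨ 2 ^ k % 3 = 2 := by
  induction k with
  | zero => left; rfl
  | succ n ih =>
      rw [pow_succ, Nat.mul_mod]
      rcases ih with h | h <;> rw [h] <;> simp

lemma mm_inj : ∀ (L L' : List (Fin 3)) (c0 c0' : ℕ), L.length = L'.length →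
    mm c0 L = mm c0' L' → c0 = c0' ∧ L = L'
  | [], [], c0, c0', _, h => ⟨h, rfl⟩
  | [], c' :: T', _, _, hl, _ => by simp at hl
  | c :: T, [], _, _, hl, _ => by simp at hl
  | c :: T, c' :: T', c0, c0', hl, h => by
      have hl' : T.length = T'.length := by simpa using hl
      rw [mm, mm, ← hl'] at h
      obtain ⟨cv, hcv⟩ := c
      obtain ⟨cv', hcv'⟩ := c'
      simp only [Fin.val_mk] at h
      have h3 := two_pow_mod3 (T.length + 1)
      have hc : cv = cv' ∧ mm c0 T = mm c0' T' := by
        generalize (2:ℕ) ^ (T.length + 1) = t at h h3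
        interval_cases cv <;> interval_cases cv' <;> omega
      obtain ⟨h1, h2⟩ := hc
      obtain ⟨hc0, hT⟩ := mm_inj T T' c0 c0' hl' h2
      subst h1 hc0 hT
      exact ⟨rfl, rfl⟩

/-! ## Assembly -/

lemma hker : cgen ≤ Con.ker phiF := by
  apply Con.conGen_le.2
  rintro u v ⟨rfl, rfl⟩
  show phiF _ = phiF _
  simp [phiF, FreeMonoid.lift_ofList, Mgen]

def phi : cgen.Quotient →* Mat := cgen.lift phiF hker

lemma phi_coe (u : FreeMonoid X) : phi u = phiF u := Con.lift_coe hker u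

lemma phiF_eq_of_cl {u v : List X} (h : cl u v) :
    phiF (FreeMonoid.ofList u) = phiF (FreeMonoid.ofList v) := hker h

lemma phi_inj : Function.Injective phi := by
  intro x y
  induction x using Con.induction_on with | H u =>
  induction y using Con.induction_on with | H v =>
  intro h
  rw [phi_coe, phi_coe] at h
  have hu := nrm_spec (FreeMonoid.toList u)
  have hv := nrm_spec (FreeMonoid.toList v)
  have hu' : phiF u = phiF (FreeMonoid.ofList
      (wrd (nrm (FreeMonoid.toList u)).1 (nrm (FreeMonoid.toList u)).2)) := by
    have := phiF_eq_of_cl hu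
    rwa [FreeMonoid.ofList_toList] at this
  have hv' : phiF v = phiF (FreeMonoid.ofList
      (wrd (nrm (FreeMonoid.toList v)).1 (nrm (FreeMonoid.toList v)).2)) := by
    have := phiF_eq_of_cl hv
    rwa [FreeMonoid.ofList_toList] at this
  set p := nrm (FreeMonoid.toList u) with hp
  set q := nrm (FreeMonoid.toList v) with hq
  have hmat : (!![2 ^ p.2.length, mm p.1 p.2; 0, 3 ^ p.2.length] : Mat) =
      !![2 ^ q.2.length, mm q.1 q.2; 0, 3 ^ q.2.length] := by
    rw [← prod_wrd, ← prod_wrd, ← FreeMonoid.lift_ofList Mgen, ← FreeMonoid.lift_ofList Mgen]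
    show phiF _ = phiF _
    rw [← hu', ← hv', h]
  have h00 : (2 : ℕ) ^ p.2.length = 2 ^ q.2.length := by
    have := congrFun (congrFun hmat 0) 0
    simpa using this
  have hlen : p.2.length = q.2.length :=
    Nat.pow_right_injective (by norm_num) h00
  have h01 : mm p.1 p.2 = mm q.1 q.2 := by
    have := congrFun (congrFun hmat 0) 1
    simpa using this
  obtain ⟨hc0, hL⟩ := mm_inj p.2 q.2 p.1 q.1 hlen h01
  have hpq : p = q := Prod.ext hc0 hL
  have hu2 : cgen (FreeMonoid.ofList (FreeMonoid.toList u))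
      (FreeMonoid.ofList (wrd p.1 p.2)) := hu
  have hv2 : cgen (FreeMonoid.ofList (FreeMonoid.toList v))
      (FreeMonoid.ofList (wrd q.1 q.2)) := hv
  rw [FreeMonoid.ofList_toList] at hu2 hv2
  rw [hpq] at hu2
  exact (Con.eq cgen).mpr (cgen.trans hu2 (cgen.symm hv2))

/-- Example `ex-bsThreeTwo` with Corollary `cor-resid`: the
Baumslag–Solitar monoid `BS⁺(3,2)` is residually finite. -/
theorem bs32_residually_finite : ResiduallyFinite BS32 := by
  intro x y hxy
  have hphi : phi x ≠ phi y := fun h => hxy (phi_inj h)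
  have hij : ∃ i j, phi x i j ≠ phi y i j := by
    by_contra hc
    push_neg at hc
    exact hphi (by ext i j; exact hc i j)
  obtain ⟨i, j, hij⟩ := hij
  set N : ℕ := phi x i j + phi y i j + 1 with hN
  haveI : NeZero N := ⟨by omega⟩
  refine ⟨Matrix (Fin 2) (Fin 2) (ZMod N), inferInstance,
    ((Nat.castRingHom (ZMod N)).mapMatrix.toMonoidHom).comp phi, inferInstance, ?_⟩
  intro h
  have h2 : (phi x).map (Nat.cast : ℕ → ZMod N) = (phi y).map (Nat.cast : ℕ → ZMod N) := by
    exact h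
  have hentry : ((phi x i j : ℕ) : ZMod N) = ((phi y i j : ℕ) : ZMod N) := by
    have := congrFun (congrFun h2 i) j
    simpa [Matrix.map_apply] using this
  have hx' : phi x i j < N := by omega
  have hy' : phi y i j < N := by omega
  have := congrArg ZMod.val hentry
  rw [ZMod.val_cast_of_lt hx', ZMod.val_cast_of_lt hy'] at this
  exact hij this

end Stmt18
end

section
/- The Artin–Krammer monoid presented by ⟨a, b, c | abab = aba, ac = ca, bcbc = bcb⟩ is residually finite: for any two distinct elements x, y there exist a finite monoid F and a monoid homomorphism f to F with f(x) ≠ f(y). -/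
namespace Stmt19

/-- A monoid `M` is residually finite if distinct elements can be separated by a
homomorphism to a finite monoid. -/
def ResiduallyFinite (M : Type) [Monoid M] : Prop :=
  ∀ x y : M, x ≠ y →
    ∃ (F : Type) (mF : Monoid F)
      (f : @MonoidHom M F (Monoid.toMulOneClass (M := M)).toMulOne mF.toMulOneClass.toMulOne),
      Finite F ∧ f x ≠ f y

/-- The generators of the Artin–Krammer monoid. -/
inductive X : Type
  | a : X
  | b : X
  | c : X
  deriving DecidableEq

instance : Fintype X := ⟨{X.a, X.b, X.c}, fun x => by cases x <;> simp⟩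

/-- The defining relations of the Artin–Krammer monoid:
`abab = aba`, `ac = ca`, `bcbc = bcb`. -/
def akRel : FreeMonoid X → FreeMonoid X → Prop :=
  fun u v =>
    (u = FreeMonoid.ofList [X.a, X.b, X.a, X.b] ∧
      v = FreeMonoid.ofList [X.a, X.b, X.a]) ∨
    (u = FreeMonoid.ofList [X.a, X.c] ∧ v = FreeMonoid.ofList [X.c, X.a]) ∨
    (u = FreeMonoid.ofList [X.b, X.c, X.b, X.c] ∧
      v = FreeMonoid.ofList [X.b, X.c, X.b])

/-- The Artin–Krammer monoid `⟨a, b, c | abab = aba, ac = ca, bcbc = bcb⟩`. -/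
def ArtinKrammerMonoid : Type := (conGen akRel).Quotient

instance : Monoid ArtinKrammerMonoid := by unfold ArtinKrammerMonoid; infer_instance

open List



/-! ### The one-letter normalization machine (states are *reversed* words) -/

def afterA : List X → List X
  | [] => []
  | X.a :: s => afterA s
  | X.b :: s => X.b :: s
  | X.c :: s => X.c :: s

def takeA : List X → List X
  | [] => []
  | X.a :: s => X.a :: takeA s
  | X.b :: _ => []
  | X.c :: _ => []

def afterB : List X → List X
  | [] => []
  | X.b :: s => afterB s
  | X.a :: s => X.a :: s
  | X.c :: s => X.c :: s

def takeB : List X → List X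
  | [] => []
  | X.b :: s => X.b :: takeB s
  | X.a :: _ => []
  | X.c :: _ => []

@[simp] theorem afterA_nil : afterA [] = [] := rfl
@[simp] theorem afterA_a (s : List X) : afterA (X.a :: s) = afterA s := rfl
@[simp] theorem afterA_b (s : List X) : afterA (X.b :: s) = X.b :: s := rfl
@[simp] theorem afterA_c (s : List X) : afterA (X.c :: s) = X.c :: s := rfl
@[simp] theorem takeA_nil : takeA [] = [] := rfl
@[simp] theorem takeA_a (s : List X) : takeA (X.a :: s) = X.a :: takeA s := rfl
@[simp] theorem takeA_b (s : List X) : takeA (X.b :: s) = [] := rfl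
@[simp] theorem takeA_c (s : List X) : takeA (X.c :: s) = [] := rfl
@[simp] theorem afterB_nil : afterB [] = [] := rfl
@[simp] theorem afterB_b (s : List X) : afterB (X.b :: s) = afterB s := rfl
@[simp] theorem afterB_a (s : List X) : afterB (X.a :: s) = X.a :: s := rfl
@[simp] theorem afterB_c (s : List X) : afterB (X.c :: s) = X.c :: s := rfl
@[simp] theorem takeB_nil : takeB [] = [] := rfl
@[simp] theorem takeB_b (s : List X) : takeB (X.b :: s) = X.b :: takeB s := rfl
@[simp] theorem takeB_a (s : List X) : takeB (X.a :: s) = [] := rfl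
@[simp] theorem takeB_c (s : List X) : takeB (X.c :: s) = [] := rfl

theorem takeA_append_afterA : ∀ s : List X, takeA s ++ afterA s = s
  | [] => rfl
  | X.a :: s => by simp [takeA_append_afterA s]
  | X.b :: _ => rfl
  | X.c :: _ => rfl

theorem takeB_append_afterB : ∀ s : List X, takeB s ++ afterB s = s
  | [] => rfl
  | X.b :: s => by simp [takeB_append_afterB s]
  | X.a :: _ => rfl
  | X.c :: _ => rfl

theorem afterA_takeA_append : ∀ (s r : List X), afterA (takeA s ++ r) = afterA r
  | [], r => rfl
  | X.a :: s, r => by simp [afterA_takeA_append s r]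
  | X.b :: _, r => rfl
  | X.c :: _, r => rfl

theorem takeA_eq_replicate : ∀ s : List X, takeA s = replicate (takeA s).length X.a
  | [] => rfl
  | X.a :: s => by simp [replicate_succ, ← takeA_eq_replicate s]
  | X.b :: _ => rfl
  | X.c :: _ => rfl

theorem takeB_eq_replicate : ∀ s : List X, takeB s = replicate (takeB s).length X.b
  | [] => rfl
  | X.b :: s => by simp [replicate_succ, ← takeB_eq_replicate s]
  | X.a :: _ => rfl
  | X.c :: _ => rfl

def isBA : List X → Bool
  | X.b :: X.a :: _ => true
  | _ => false

def isCBA : List X → Bool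
  | X.c :: X.b :: X.a :: _ => true
  | _ => false

theorem of_isBA {t : List X} (h : isBA t = true) : ∃ q, t = X.b :: X.a :: q := by
  match t, h with
  | X.b :: X.a :: q, _ => exact ⟨q, rfl⟩

theorem of_isCBA {t : List X} (h : isCBA t = true) : ∃ q, t = X.c :: X.b :: X.a :: q := by
  match t, h with
  | X.c :: X.b :: X.a :: q, _ => exact ⟨q, rfl⟩

@[simp] theorem isBA_ba (q : List X) : isBA (X.b :: X.a :: q) = true := rfl
@[simp] theorem isBA_cq (q : List X) : isBA (X.c :: q) = false := rfl
@[simp] theorem isCBA_cba (q : List X) : isCBA (X.c :: X.b :: X.a :: q) = true := rfl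

def condB : List X → Bool
  | X.a :: s => isBA (afterA s)
  | _ => false

@[simp] theorem condB_a (s : List X) : condB (X.a :: s) = isBA (afterA s) := rfl
@[simp] theorem condB_nil : condB [] = false := rfl
@[simp] theorem condB_b (s : List X) : condB (X.b :: s) = false := rfl
@[simp] theorem condB_c (s : List X) : condB (X.c :: s) = false := rfl

def condC2aux : List X → Bool
  | X.c :: X.b :: _ => true
  | X.a :: u => isCBA (afterA u)
  | _ => false

@[simp] theorem condC2aux_cb (q : List X) : condC2aux (X.c :: X.b :: q) = true := rfl
@[simp] theorem condC2aux_a (u : List X) : condC2aux (X.a :: u) = isCBA (afterA u) := rfl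

def condC : List X → Bool
  | X.b :: t => condC2aux (afterB t)
  | _ => false

@[simp] theorem condC_b (t : List X) : condC (X.b :: t) = condC2aux (afterB t) := rfl
@[simp] theorem condC_nil : condC [] = false := rfl
@[simp] theorem condC_a (t : List X) : condC (X.a :: t) = false := rfl
@[simp] theorem condC_c (t : List X) : condC (X.c :: t) = false := rfl

def stepb (s : List X) : List X := if condB s then s else X.b :: s
def stepc (s : List X) : List X :=
  if condC (afterA s) then s else takeA s ++ X.c :: afterA s

def step (g : X) (s : List X) : List X :=
  match g with
  | X.a => X.a :: s
  | X.b => stepb s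
  | X.c => stepc s

@[simp] theorem step_a (s : List X) : step X.a s = X.a :: s := rfl
theorem step_b (s : List X) : step X.b s = stepb s := rfl
theorem step_c (s : List X) : step X.c s = stepc s := rfl

theorem length_le_step (g : X) (s : List X) : s.length ≤ (step g s).length := by
  cases g with
  | a => simp
  | b =>
    rw [step_b, stepb]
    split <;> simp
  | c =>
    rw [step_c, stepc]
    split
    · exact le_refl _
    · conv_lhs => rw [← takeA_append_afterA s]
      simp [List.length_append]

/-! ### The three relation identities for `step` -/

theorem idAC (s : List X) : step X.c (step X.a s) = step X.a (step X.c s) := by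
  rw [step_a, step_c, step_c, stepc, stepc, step_a]
  simp only [afterA_a, takeA_a]
  split <;> simp_all

theorem idABAB (s : List X) :
    step X.b (step X.a (step X.b (step X.a s))) = step X.a (step X.b (step X.a s)) := by
  rw [step_a, step_b, step_b, step_a]
  suffices h : condB (X.a :: stepb (X.a :: s)) = true by
    rw [stepb, if_pos h]
  rw [stepb]
  cases h1 : condB (X.a :: s) with
  | true => simpa using h1
  | false => simp

theorem idBCBC (s : List X) :
    step X.c (step X.b (step X.c (step X.b s))) = step X.b (step X.c (step X.b s)) := by
  rw [step_b, step_c, step_b, step_c]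
  cases hB : condB s with
  | true =>
    -- s = a :: s' with afterA s' = b :: a :: q
    obtain ⟨s', rfl⟩ : ∃ s', s = X.a :: s' := by
      cases s with
      | nil => simp at hB
      | cons g s' =>
        cases g with
        | a => exact ⟨s', rfl⟩
        | b => simp at hB
        | c => simp at hB
    have hBA : isBA (afterA s') = true := by simpa using hB
    obtain ⟨q, hq⟩ := of_isBA hBA
    have h1 : stepb (X.a :: s') = X.a :: s' := by rw [stepb, if_pos hB]
    rw [h1]
    have hA : afterA (X.a :: s') = X.b :: X.a :: q := by simpa using hq
    cases h2 : isCBA (afterA q) with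
    | true =>
      have hc : condC (afterA (X.a :: s')) = true := by
        rw [hA]; simpa using h2
      have e2 : stepc (X.a :: s') = X.a :: s' := by rw [stepc, if_pos hc]
      rw [e2, h1, e2]
    | false =>
      have hc : condC (afterA (X.a :: s')) = false := by
        rw [hA]; simpa using h2
      have e2 : stepc (X.a :: s') = X.a :: (takeA s' ++ X.c :: X.b :: X.a :: q) := by
        rw [stepc, if_neg (by simpa using hc)]
        simp [hA]
      rw [e2]
      have e3 : stepb (X.a :: (takeA s' ++ X.c :: X.b :: X.a :: q))
          = X.b :: X.a :: (takeA s' ++ X.c :: X.b :: X.a :: q) := by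
        rw [stepb, if_neg (by simp [afterA_takeA_append])]
      rw [e3]
      have hfin : condC (afterA (X.b :: X.a :: (takeA s' ++ X.c :: X.b :: X.a :: q))) = true := by
        simp [afterA_takeA_append]
      rw [stepc, if_pos hfin]
  | false =>
    have h1 : stepb s = X.b :: s := by rw [stepb, if_neg (by simp [hB])]
    rw [h1]
    cases h2 : condC (X.b :: s) with
    | true =>
      have hc : condC (afterA (X.b :: s)) = true := by simpa using h2
      have e2 : stepc (X.b :: s) = X.b :: s := by rw [stepc, if_pos hc]
      have e3 : stepb (X.b :: s) = X.b :: X.b :: s := by rw [stepb, if_neg (by simp)]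
      rw [e2, e3]
      have hc2 : condC (afterA (X.b :: X.b :: s)) = true := by simpa using h2
      rw [stepc, if_pos hc2]
    | false =>
      have hc : condC (afterA (X.b :: s)) = false := by simpa using h2
      have e2 : stepc (X.b :: s) = X.c :: X.b :: s := by
        rw [stepc, if_neg (by simpa using hc)]; simp
      rw [e2]
      have e3 : stepb (X.c :: X.b :: s) = X.b :: X.c :: X.b :: s := by
        rw [stepb, if_neg (by simp)]
      rw [e3]
      have hfin : condC (afterA (X.b :: X.c :: X.b :: s)) = true := by simp
      rw [stepc, if_pos hfin]


/-! ### Extraction lemmas for the boolean conditions -/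

theorem of_condB {s : List X} (h : condB s = true) :
    ∃ s', s = X.a :: s' ∧ isBA (afterA s') = true := by
  cases s with
  | nil => simp at h
  | cons g s' =>
    cases g with
    | a => exact ⟨s', rfl, by simpa using h⟩
    | b => simp at h
    | c => simp at h

theorem of_condC {t : List X} (h : condC t = true) :
    ∃ t', t = X.b :: t' ∧ condC2aux (afterB t') = true := by
  cases t with
  | nil => simp [condC] at h
  | cons g t' =>
    cases g with
    | b => exact ⟨t', rfl, by simpa using h⟩
    | a => simp at h
    | c => simp at h

theorem of_condC2aux {u : List X} (h : condC2aux u = true) :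
    (∃ q, u = X.c :: X.b :: q) ∨ (∃ v, u = X.a :: v ∧ isCBA (afterA v) = true) := by
  cases u with
  | nil => simp [condC2aux] at h
  | cons g u' =>
    cases g with
    | a => exact Or.inr ⟨u', rfl, by simpa using h⟩
    | b => simp [condC2aux] at h
    | c =>
      cases u' with
      | nil => simp [condC2aux] at h
      | cons g2 u'' =>
        cases g2 with
        | b => exact Or.inl ⟨u'', rfl⟩
        | a => simp [condC2aux] at h
        | c => simp [condC2aux] at h

theorem rep_cons_comm (k : ℕ) (x : X) (l : List X) :
    replicate k x ++ x :: l = x :: (replicate k x ++ l) := by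
  induction k <;> simp [replicate_succ, *]

/-! ### Words in the Artin–Krammer monoid -/

def mkw (l : List X) : (conGen akRel).Quotient := ((FreeMonoid.ofList l : FreeMonoid X) : _)

theorem mkw_append (l₁ l₂ : List X) : mkw (l₁ ++ l₂) = mkw l₁ * mkw l₂ := by
  unfold mkw
  rw [FreeMonoid.ofList_append]
  rfl

theorem mkw_congr_append (p : List X) {l₁ l₂ : List X} (h : mkw l₁ = mkw l₂) :
    mkw (p ++ l₁) = mkw (p ++ l₂) := by rw [mkw_append, mkw_append, h]

theorem mkw_cons_congr (g : X) {l₁ l₂ : List X} (h : mkw l₁ = mkw l₂) :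
    mkw (g :: l₁) = mkw (g :: l₂) := mkw_congr_append [g] h

theorem R1C (l : List X) :
    mkw (X.a :: X.b :: X.a :: X.b :: l) = mkw (X.a :: X.b :: X.a :: l) := by
  have h : mkw [X.a, X.b, X.a, X.b] = mkw [X.a, X.b, X.a] :=
    (Con.eq _).mpr (ConGen.Rel.of _ _ (Or.inl ⟨rfl, rfl⟩))
  calc mkw (X.a :: X.b :: X.a :: X.b :: l) = mkw ([X.a, X.b, X.a, X.b] ++ l) := rfl
    _ = mkw [X.a, X.b, X.a, X.b] * mkw l := mkw_append _ _
    _ = mkw [X.a, X.b, X.a] * mkw l := by rw [h]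
    _ = mkw ([X.a, X.b, X.a] ++ l) := (mkw_append _ _).symm

theorem R2C (l : List X) :
    mkw (X.a :: X.c :: l) = mkw (X.c :: X.a :: l) := by
  have h : mkw [X.a, X.c] = mkw [X.c, X.a] :=
    (Con.eq _).mpr (ConGen.Rel.of _ _ (Or.inr (Or.inl ⟨rfl, rfl⟩)))
  calc mkw (X.a :: X.c :: l) = mkw ([X.a, X.c] ++ l) := rfl
    _ = mkw [X.a, X.c] * mkw l := mkw_append _ _
    _ = mkw [X.c, X.a] * mkw l := by rw [h]
    _ = mkw ([X.c, X.a] ++ l) := (mkw_append _ _).symm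

theorem R3C (l : List X) :
    mkw (X.b :: X.c :: X.b :: X.c :: l) = mkw (X.b :: X.c :: X.b :: l) := by
  have h : mkw [X.b, X.c, X.b, X.c] = mkw [X.b, X.c, X.b] :=
    (Con.eq _).mpr (ConGen.Rel.of _ _ (Or.inr (Or.inr ⟨rfl, rfl⟩)))
  calc mkw (X.b :: X.c :: X.b :: X.c :: l) = mkw ([X.b, X.c, X.b, X.c] ++ l) := rfl
    _ = mkw [X.b, X.c, X.b, X.c] * mkw l := mkw_append _ _
    _ = mkw [X.b, X.c, X.b] * mkw l := by rw [h]
    _ = mkw ([X.b, X.c, X.b] ++ l) := (mkw_append _ _).symm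

/-- `c` commutes with a block of `a`'s. -/
theorem L0C (k : ℕ) (l : List X) :
    mkw (replicate k X.a ++ X.c :: l) = mkw (X.c :: (replicate k X.a ++ l)) := by
  induction k generalizing l with
  | zero => simp
  | succ k ih =>
    calc mkw (replicate (k+1) X.a ++ X.c :: l)
        = mkw (X.a :: (replicate k X.a ++ X.c :: l)) := by
          simp [replicate_succ]
      _ = mkw (X.a :: X.c :: (replicate k X.a ++ l)) := mkw_cons_congr _ (ih l)
      _ = mkw (X.c :: X.a :: (replicate k X.a ++ l)) := R2C _
      _ = mkw (X.c :: (replicate (k+1) X.a ++ l)) := by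
          simp [replicate_succ]

/-- `a b a^{k+1} b = a b a^{k+1}`. -/
theorem L1C (k : ℕ) (l : List X) :
    mkw (X.a :: X.b :: (replicate (k+1) X.a ++ X.b :: l)) =
      mkw (X.a :: X.b :: (replicate (k+1) X.a ++ l)) := by
  induction k generalizing l with
  | zero => simpa [replicate_succ] using R1C l
  | succ k ih =>
    calc mkw (X.a :: X.b :: (replicate (k+2) X.a ++ X.b :: l))
        = mkw (X.a :: X.b :: (replicate (k+1) X.a ++ (X.a :: X.b :: l))) := by
          apply congrArg
          simp [replicate_succ, rep_cons_comm]
      _ = mkw (X.a :: X.b :: (replicate (k+1) X.a ++ X.b :: (X.a :: X.b :: l))) :=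
          (ih (X.a :: X.b :: l)).symm
      _ = mkw (X.a :: X.b :: (replicate k X.a ++ (X.a :: X.b :: X.a :: X.b :: l))) := by
          apply congrArg
          simp [replicate_succ, rep_cons_comm]
      _ = mkw (X.a :: X.b :: (replicate k X.a ++ (X.a :: X.b :: X.a :: l))) :=
          mkw_cons_congr _ (mkw_cons_congr _ (mkw_congr_append _ (R1C l)))
      _ = mkw (X.a :: X.b :: (replicate (k+1) X.a ++ X.b :: (X.a :: l))) := by
          apply congrArg
          simp [replicate_succ, rep_cons_comm]
      _ = mkw (X.a :: X.b :: (replicate (k+1) X.a ++ (X.a :: l))) := ih (X.a :: l)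
      _ = mkw (X.a :: X.b :: (replicate (k+2) X.a ++ l)) := by
          apply congrArg
          simp [replicate_succ, rep_cons_comm]

/-- `b c b^{k+1} c = b c b^{k+1}`. -/
theorem L2C (k : ℕ) (l : List X) :
    mkw (X.b :: X.c :: (replicate (k+1) X.b ++ X.c :: l)) =
      mkw (X.b :: X.c :: (replicate (k+1) X.b ++ l)) := by
  induction k generalizing l with
  | zero => simpa [replicate_succ] using R3C l
  | succ k ih =>
    calc mkw (X.b :: X.c :: (replicate (k+2) X.b ++ X.c :: l))
        = mkw (X.b :: X.c :: (replicate (k+1) X.b ++ (X.b :: X.c :: l))) := by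
          apply congrArg
          simp [replicate_succ, rep_cons_comm]
      _ = mkw (X.b :: X.c :: (replicate (k+1) X.b ++ X.c :: (X.b :: X.c :: l))) :=
          (ih (X.b :: X.c :: l)).symm
      _ = mkw (X.b :: X.c :: (replicate k X.b ++ (X.b :: X.c :: X.b :: X.c :: l))) := by
          apply congrArg
          simp [replicate_succ, rep_cons_comm]
      _ = mkw (X.b :: X.c :: (replicate k X.b ++ (X.b :: X.c :: X.b :: l))) :=
          mkw_cons_congr _ (mkw_cons_congr _ (mkw_congr_append _ (R3C l)))
      _ = mkw (X.b :: X.c :: (replicate (k+1) X.b ++ X.c :: (X.b :: l))) := by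
          apply congrArg
          simp [replicate_succ, rep_cons_comm]
      _ = mkw (X.b :: X.c :: (replicate (k+1) X.b ++ (X.b :: l))) := ih (X.b :: l)
      _ = mkw (X.b :: X.c :: (replicate (k+2) X.b ++ l)) := by
          apply congrArg
          simp [replicate_succ, rep_cons_comm]

/-- `a b c a^{i+1} b^{j+1} c = a b c a^{i+1} b^{j+1}`. -/
theorem L3C (i j : ℕ) (l : List X) :
    mkw (X.a :: X.b :: X.c :: (replicate (i+1) X.a ++ (replicate (j+1) X.b ++ X.c :: l))) =
      mkw (X.a :: X.b :: X.c :: (replicate (i+1) X.a ++ (replicate (j+1) X.b ++ l))) := by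
  induction i generalizing l with
  | zero =>
    calc mkw (X.a :: X.b :: X.c :: (replicate 1 X.a ++ (replicate (j+1) X.b ++ X.c :: l)))
        = mkw (X.a :: X.b :: X.c :: X.a :: (replicate (j+1) X.b ++ X.c :: l)) := by
          apply congrArg
          simp [replicate_succ]
      _ = mkw (X.a :: X.b :: X.a :: X.c :: (replicate (j+1) X.b ++ X.c :: l)) :=
          (mkw_cons_congr _ (mkw_cons_congr _ (R2C _))).symm
      _ = mkw (X.a :: X.b :: X.a :: X.b :: (X.c :: (replicate (j+1) X.b ++ X.c :: l))) :=
          (R1C _).symm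
      _ = mkw (X.a :: X.b :: X.a :: (X.b :: X.c :: (replicate (j+1) X.b ++ X.c :: l))) := rfl
      _ = mkw (X.a :: X.b :: X.a :: (X.b :: X.c :: (replicate (j+1) X.b ++ l))) :=
          mkw_cons_congr _ (mkw_cons_congr _ (mkw_cons_congr _ (L2C j l)))
      _ = mkw (X.a :: X.b :: X.a :: (X.c :: (replicate (j+1) X.b ++ l))) := R1C _
      _ = mkw (X.a :: X.b :: X.c :: X.a :: (replicate (j+1) X.b ++ l)) :=
          mkw_cons_congr _ (mkw_cons_congr _ (R2C _))
      _ = mkw (X.a :: X.b :: X.c :: (replicate 1 X.a ++ (replicate (j+1) X.b ++ l))) := by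
          apply congrArg
          simp [replicate_succ]
  | succ i ih =>
    calc mkw (X.a :: X.b :: X.c :: (replicate (i+2) X.a ++ (replicate (j+1) X.b ++ X.c :: l)))
        = mkw (X.a :: X.b :: X.c :: X.a ::
            (replicate (i+1) X.a ++ (replicate (j+1) X.b ++ X.c :: l))) := by
          apply congrArg
          simp [replicate_succ]
      _ = mkw (X.a :: X.b :: X.a :: X.c ::
            (replicate (i+1) X.a ++ (replicate (j+1) X.b ++ X.c :: l))) :=
          (mkw_cons_congr _ (mkw_cons_congr _ (R2C _))).symm
      _ = mkw (X.a :: X.b :: X.a :: X.b :: (X.c ::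
            (replicate (i+1) X.a ++ (replicate (j+1) X.b ++ X.c :: l)))) :=
          (R1C _).symm
      _ = mkw (X.a :: X.b :: (X.a :: X.b :: X.c ::
            (replicate (i+1) X.a ++ (replicate (j+1) X.b ++ X.c :: l)))) := rfl
      _ = mkw (X.a :: X.b :: (X.a :: X.b :: X.c ::
            (replicate (i+1) X.a ++ (replicate (j+1) X.b ++ l)))) :=
          mkw_cons_congr _ (mkw_cons_congr _ (ih l))
      _ = mkw (X.a :: X.b :: X.a :: (X.c ::
            (replicate (i+1) X.a ++ (replicate (j+1) X.b ++ l)))) := R1C _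
      _ = mkw (X.a :: X.b :: X.c :: X.a ::
            (replicate (i+1) X.a ++ (replicate (j+1) X.b ++ l))) :=
          mkw_cons_congr _ (mkw_cons_congr _ (R2C _))
      _ = mkw (X.a :: X.b :: X.c ::
            (replicate (i+2) X.a ++ (replicate (j+1) X.b ++ l))) := by
          apply congrArg
          simp [replicate_succ]

/-- One `step` multiplies the represented element by the generator. -/
theorem step_compat (g : X) (s : List X) :
    mkw ((step g s).reverse) = mkw (s.reverse ++ [g]) := by
  cases g with
  | a => simp [step_a]
  | b =>
    rw [step_b, stepb]
    cases hB : condB s with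
    | false => rw [if_neg (by simp [hB])]; simp
    | true =>
      rw [if_pos rfl]
      obtain ⟨s', rfl, hBA⟩ := of_condB hB
      obtain ⟨q, hq⟩ := of_isBA hBA
      have hs : s' = replicate (takeA s').length X.a ++ (X.b :: X.a :: q) := by
        conv_lhs => rw [← takeA_append_afterA s']
        congr 1
        exact takeA_eq_replicate s' 
      set m := (takeA s').length with hm
      rw [hs]
      symm
      calc mkw ((X.a :: (replicate m X.a ++ (X.b :: X.a :: q))).reverse ++ [X.b])
          = mkw (q.reverse ++ (X.a :: X.b :: (replicate (m+1) X.a ++ X.b :: []))) := by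
            apply congrArg
            simp [replicate_succ, rep_cons_comm]
        _ = mkw (q.reverse ++ (X.a :: X.b :: (replicate (m+1) X.a ++ []))) :=
            mkw_congr_append _ (L1C m [])
        _ = mkw ((X.a :: (replicate m X.a ++ (X.b :: X.a :: q))).reverse) := by
            apply congrArg
            simp [replicate_succ, rep_cons_comm]
  | c =>
    rw [step_c, stepc]
    cases hC : condC (afterA s) with
    | false =>
      rw [if_neg (by simp [hC])]
      have hs : s = replicate (takeA s).length X.a ++ afterA s := by
        conv_lhs => rw [← takeA_append_afterA s]
        congr 1
        exact takeA_eq_replicate s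
      set k := (takeA s).length with hk
      rw [takeA_eq_replicate s, ← hk]
      conv_rhs => rw [hs]
      calc mkw ((replicate k X.a ++ X.c :: afterA s).reverse)
          = mkw ((afterA s).reverse ++ (X.c :: (replicate k X.a ++ []))) := by
            apply congrArg
            simp
        _ = mkw ((afterA s).reverse ++ (replicate k X.a ++ X.c :: [])) :=
            (mkw_congr_append _ (L0C k [])).symm
        _ = mkw ((replicate k X.a ++ afterA s).reverse ++ [X.c]) := by
            apply congrArg
            simp
    | true =>
      rw [if_pos rfl]
      obtain ⟨t, hAs, hAux⟩ := of_condC hC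
      have hs : s = replicate (takeA s).length X.a ++ (X.b :: t) := by
        conv_lhs => rw [← takeA_append_afterA s]
        congr 1
        exact takeA_eq_replicate s
      set k := (takeA s).length with hk
      have ht : t = replicate (takeB t).length X.b ++ afterB t := by
        conv_lhs => rw [← takeB_append_afterB t]
        congr 1
        exact takeB_eq_replicate t
      set m := (takeB t).length with hm
      rcases of_condC2aux hAux with ⟨q, hu⟩ | ⟨v, hu, hCBA⟩
      · -- s = a^k b b^m c b q
        have hsfull : s = replicate k X.a ++ (X.b :: (replicate m X.b ++ (X.c :: X.b :: q))) := by
          rw [hs, ht, hu]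
        rw [hsfull]
        symm
        calc mkw ((replicate k X.a ++ (X.b :: (replicate m X.b ++ (X.c :: X.b :: q)))).reverse
              ++ [X.c])
            = mkw ((q.reverse ++ (X.b :: X.c :: replicate (m+1) X.b))
                ++ (replicate k X.a ++ X.c :: [])) := by
              apply congrArg
              simp [replicate_succ, rep_cons_comm]
          _ = mkw ((q.reverse ++ (X.b :: X.c :: replicate (m+1) X.b))
                ++ (X.c :: (replicate k X.a ++ []))) :=
              mkw_congr_append _ (L0C k [])
          _ = mkw (q.reverse ++ (X.b :: X.c :: (replicate (m+1) X.b
                ++ X.c :: replicate k X.a))) := by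
              apply congrArg
              simp [replicate_succ, rep_cons_comm]
          _ = mkw (q.reverse ++ (X.b :: X.c :: (replicate (m+1) X.b ++ replicate k X.a))) :=
              mkw_congr_append _ (L2C m (replicate k X.a))
          _ = mkw ((replicate k X.a
                ++ (X.b :: (replicate m X.b ++ (X.c :: X.b :: q)))).reverse) := by
              apply congrArg
              simp [replicate_succ, rep_cons_comm]
      · -- afterB t = a :: v with afterA v = c :: b :: a :: r
        obtain ⟨r, hv⟩ := of_isCBA hCBA
        have hvdec : v = replicate (takeA v).length X.a ++ (X.c :: X.b :: X.a :: r) := by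
          conv_lhs => rw [← takeA_append_afterA v]
          congr 1
          exact takeA_eq_replicate v
        set p := (takeA v).length with hp
        have hsfull : s = replicate k X.a ++ (X.b :: (replicate m X.b
            ++ (X.a :: (replicate p X.a ++ (X.c :: X.b :: X.a :: r))))) := by
          rw [hs, ht, hu, hvdec]
        rw [hsfull]
        symm
        calc mkw ((replicate k X.a ++ (X.b :: (replicate m X.b
              ++ (X.a :: (replicate p X.a ++ (X.c :: X.b :: X.a :: r)))))).reverse ++ [X.c])
            = mkw ((r.reverse ++ (X.a :: X.b :: X.c :: (replicate (p+1) X.a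
                ++ replicate (m+1) X.b))) ++ (replicate k X.a ++ X.c :: [])) := by
              apply congrArg
              simp [replicate_succ, rep_cons_comm]
          _ = mkw ((r.reverse ++ (X.a :: X.b :: X.c :: (replicate (p+1) X.a
                ++ replicate (m+1) X.b))) ++ (X.c :: (replicate k X.a ++ []))) :=
              mkw_congr_append _ (L0C k [])
          _ = mkw (r.reverse ++ (X.a :: X.b :: X.c :: (replicate (p+1) X.a
                ++ (replicate (m+1) X.b ++ X.c :: replicate k X.a)))) := by
              apply congrArg
              simp [replicate_succ, rep_cons_comm]
          _ = mkw (r.reverse ++ (X.a :: X.b :: X.c :: (replicate (p+1) X.a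
                ++ (replicate (m+1) X.b ++ replicate k X.a)))) :=
              mkw_congr_append _ (L3C p m (replicate k X.a))
          _ = mkw ((replicate k X.a ++ (X.b :: (replicate m X.b
                ++ (X.a :: (replicate p X.a ++ (X.c :: X.b :: X.a :: r)))))).reverse) := by
              apply congrArg
              simp [replicate_succ, rep_cons_comm]

/-! ### Running the machine -/

/-- Running the machine over a word, starting from state `s`. -/
def runFrom (s : List X) (l : List X) : List X := l.foldl (fun t g => step g t) s

@[simp] theorem runFrom_nil (s : List X) : runFrom s [] = s := rfl
@[simp] theorem runFrom_cons (s : List X) (g : X) (l : List X) :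
    runFrom s (g :: l) = runFrom (step g s) l := rfl

theorem runFrom_compat (l : List X) : ∀ s : List X,
    mkw ((runFrom s l).reverse) = mkw (s.reverse) * mkw l := by
  induction l with
  | nil => intro s; simp [mkw, mul_one]
  | cons g l ih =>
    intro s
    calc mkw ((runFrom (step g s) l).reverse)
        = mkw ((step g s).reverse) * mkw l := ih (step g s)
      _ = mkw (s.reverse ++ [g]) * mkw l := by rw [step_compat]
      _ = mkw s.reverse * (mkw [g] * mkw l) := by rw [mkw_append, mul_assoc]
      _ = mkw s.reverse * mkw (g :: l) := by rw [← mkw_append]; rfl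

theorem run_mk (l : List X) : mkw ((runFrom [] l).reverse) = mkw l := by
  have h := runFrom_compat l []
  simpa [mkw, one_mul] using h

/-! ### The finite truncated monoids -/

/-- States of length at most `n`, plus a sink (`none`). -/
def Sn (n : ℕ) : Type := Option {l : List X // l.length ≤ n}

instance (n : ℕ) : Finite (Sn n) := by
  unfold Sn
  haveI : Finite {l : List X // l.length ≤ n} := (List.finite_length_le X n).to_subtype
  exact Finite.of_equiv _ (Equiv.optionEquivSumPUnit.{0,0} _).symm

def trunc (n : ℕ) (l : List X) : Sn n :=
  if h : l.length ≤ n then some ⟨l, h⟩ else none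

def stepn (n : ℕ) (g : X) : Sn n → Sn n
  | none => none
  | some ⟨l, _⟩ => trunc n (step g l)

theorem stepn_trunc (n : ℕ) (g : X) (l : List X) :
    stepn n g (trunc n l) = trunc n (step g l) := by
  by_cases h : l.length ≤ n
  · simp [trunc, h, stepn]
  · have h2 : ¬ (step g l).length ≤ n := fun hh => h ((length_le_step g l).trans hh)
    simp [trunc, h, h2, stepn]; rfl

@[simp] theorem stepn_none (n : ℕ) (g : X) : stepn n g none = none := rfl

theorem foldl_stepn_trunc (n : ℕ) (l : List X) : ∀ s : List X,
    l.foldl (fun t g => stepn n g t) (trunc n s) = trunc n (runFrom s l) := by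
  induction l with
  | nil => intro s; rfl
  | cons g l ih =>
    intro s
    show l.foldl (fun t g => stepn n g t) (stepn n g (trunc n s)) = trunc n (runFrom (step g s) l)
    rw [stepn_trunc]
    exact ih (step g s)

theorem foldl_stepn_none (n : ℕ) (l : List X) :
    l.foldl (fun t g => stepn n g t) none = none := by
  induction l with
  | nil => rfl
  | cons g l ih => exact ih

/-! ### The truncated representations as monoid homomorphisms -/

def phi (n : ℕ) : FreeMonoid X →* (Function.End (Sn n))ᵐᵒᵖ :=
  FreeMonoid.lift fun g => MulOpposite.op (stepn n g)

theorem phi_eval (n : ℕ) (l : List X) : ∀ s : Sn n,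
    (MulOpposite.unop (phi n (FreeMonoid.ofList l))) s
      = l.foldl (fun t g => stepn n g t) s := by
  induction l with
  | nil =>
    intro s
    show (MulOpposite.unop (phi n 1)) s = s
    rw [map_one]
    rfl
  | cons g l ih =>
    intro s
    have hsplit : FreeMonoid.ofList (g :: l) = FreeMonoid.of g * FreeMonoid.ofList l := by
      rw [← FreeMonoid.ofList_singleton, ← FreeMonoid.ofList_append]
      rfl
    calc (MulOpposite.unop (phi n (FreeMonoid.ofList (g :: l)))) s
        = (MulOpposite.unop (phi n (FreeMonoid.ofList l))) (stepn n g s) := by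
          rw [hsplit, map_mul, MulOpposite.unop_mul,
            show phi n (FreeMonoid.of g) = MulOpposite.op (stepn n g) from
              FreeMonoid.lift_eval_of _ _]
          rfl
      _ = l.foldl (fun t g => stepn n g t) (stepn n g s) := ih _
      _ = (g :: l).foldl (fun t g => stepn n g t) s := rfl

theorem phi_word_eq (n : ℕ) (l₁ l₂ : List X)
    (h : ∀ s : List X, runFrom s l₁ = runFrom s l₂) :
    phi n (FreeMonoid.ofList l₁) = phi n (FreeMonoid.ofList l₂) := by
  apply MulOpposite.unop_injective
  funext s
  rw [phi_eval, phi_eval]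
  cases s with
  | none => rw [foldl_stepn_none, foldl_stepn_none]
  | some t =>
    obtain ⟨l, hl⟩ := t
    have : (some ⟨l, hl⟩ : Sn n) = trunc n l := by simp [trunc, hl]
    rw [this, foldl_stepn_trunc, foldl_stepn_trunc, h l]

theorem phi_rel (n : ℕ) : ∀ u v, akRel u v → phi n u = phi n v := by
  rintro u v (⟨rfl, rfl⟩ | ⟨rfl, rfl⟩ | ⟨rfl, rfl⟩)
  · exact phi_word_eq n _ _ fun s => idABAB s
  · exact phi_word_eq n _ _ fun s => idAC s
  · exact phi_word_eq n _ _ fun s => idBCBC s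

def Phi (n : ℕ) : (conGen akRel).Quotient →* (Function.End (Sn n))ᵐᵒᵖ :=
  Con.lift _ (phi n) (Con.conGen_le.2 fun u v h => (Con.ker_rel _).mpr (phi_rel n u v h))

instance (n : ℕ) : Finite (Function.End (Sn n)) := by
  unfold Function.End
  exact Pi.finite

instance (n : ℕ) : Finite ((Function.End (Sn n))ᵐᵒᵖ) :=
  Finite.of_equiv _ MulOpposite.opEquiv

/-! ### Main theorem -/

theorem Phi_eval_basepoint (n : ℕ) (w : FreeMonoid X) :
    (MulOpposite.unop (Phi n ((conGen akRel).mk' w))) (trunc n [])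
      = trunc n (runFrom [] (FreeMonoid.toList w)) := by
  have h1 : Phi n ((conGen akRel).mk' w) = phi n w := by
    rw [Con.coe_mk']
    exact Con.lift_coe _ w
  rw [h1]
  conv_lhs => rw [← FreeMonoid.ofList_toList w]
  rw [phi_eval]
  exact foldl_stepn_trunc n (FreeMonoid.toList w) []

theorem mk'_eq_mkw (w : FreeMonoid X) :
    (conGen akRel).mk' w = mkw (FreeMonoid.toList w) := by
  rw [Con.coe_mk', mkw, FreeMonoid.ofList_toList]

/-- the Artin–Krammer monoid is residually finite. -/
theorem artinKrammer_residually_finite' : ResiduallyFinite ArtinKrammerMonoid := by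
  intro x y hxy
  obtain ⟨u, rfl⟩ := Con.mk'_surjective (c := conGen akRel) x
  obtain ⟨v, rfl⟩ := Con.mk'_surjective (c := conGen akRel) y
  set ru := runFrom [] (FreeMonoid.toList u) with hru
  set rv := runFrom [] (FreeMonoid.toList v) with hrv
  set n := max ru.length rv.length with hn
  refine ⟨(Function.End (Sn n))ᵐᵒᵖ, inferInstance, Phi n, inferInstance, ?_⟩
  intro hEq
  apply hxy
  have hEq2 : Phi n ((conGen akRel).mk' u) = Phi n ((conGen akRel).mk' v) := hEq
  have hEq' := congrFun (congrArg MulOpposite.unop hEq2) (trunc n [])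
  replace hEq' := (Phi_eval_basepoint n u).symm.trans (hEq'.trans (Phi_eval_basepoint n v))
  have hru_le : ru.length ≤ n := le_max_left _ _
  have hrv_le : rv.length ≤ n := le_max_right _ _
  rw [← hru, ← hrv, show trunc n ru = (some ⟨ru, hru_le⟩ : Sn n) by simp [trunc, hru_le]; rfl, show trunc n rv = (some ⟨rv, hrv_le⟩ : Sn n) by simp [trunc, hrv_le]; rfl] at hEq'
  have hr : ru = rv := congrArg (fun o => (Option.map Subtype.val o).getD []) hEq'
  calc (conGen akRel).mk' u = mkw (FreeMonoid.toList u) := mk'_eq_mkw u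
    _ = mkw ru.reverse := (run_mk _).symm
    _ = mkw rv.reverse := by rw [hr]
    _ = mkw (FreeMonoid.toList v) := run_mk _
    _ = (conGen akRel).mk' v := (mk'_eq_mkw v).symm

/-- Example `ex-akram` with Corollary `cor-resid`: the Artin–Krammer
monoid `⟨a, b, c | abab = aba, ac = ca, bcbc = bcb⟩` is residually finite. -/
theorem artinKrammer_residually_finite : ResiduallyFinite ArtinKrammerMonoid :=
  artinKrammer_residually_finite'

end Stmt19
end
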